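/- (Caviglia) For every integer d ≥ 2, the ideal I_d = (z_2^{d-1} y_1 − y_2^{d-1} z_1,\ y_1^d,\ z_1^d) in k[y_1, z_1, y_2, z_2] satisfies reg I_d ≥ d^2 − 1. -/

import Mathlib

set_option synthInstance.maxHeartbeats 1000000
set_option maxHeartbeats 1000000

open MvPolynomial
open scoped Classical

/-- A graded free resolution of a graded module `M` over `S = k[x_i : i ∈ σ]`,
with `i`-th term the free module `⨁_{b : ι i} S(-twist i b)` (realized as
`ι i → S` with generators `e_b` of degree `twist i b`).  The grading of `M`
is recorded by the family `gr : ℤ → Submodule k M` of its graded pieces.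
Homogeneity of the differentials is expressed entrywise: the `(y,b)`-entry of
`d i` is homogeneous of degree `twist (i+1) b - twist i y` (and vanishes if
this is negative), and `aug e_b` lies in the degree-`twist 0 b` piece of `M`. -/
structure GradedFreeRes (k : Type) [Field k] (σ : Type)
    (M : Type) [AddCommGroup M] [Module (MvPolynomial σ k) M]
    [Module k M] [IsScalarTower k (MvPolynomial σ k) M]
    (gr : ℤ → Submodule k M) where
  ι : ℕ → Type
  fin : ∀ i, Fintype (ι i)
  twist : ∀ i, ι i → ℤ
  aug : (ι 0 → MvPolynomial σ k) →ₗ[MvPolynomial σ k] M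
  d : ∀ i, (ι (i + 1) → MvPolynomial σ k) →ₗ[MvPolynomial σ k] (ι i → MvPolynomial σ k)
  aug_surj : Function.Surjective aug
  exact_aug : LinearMap.ker aug = LinearMap.range (d 0)
  exact_d : ∀ i, LinearMap.ker (d i) = LinearMap.range (d (i + 1))
  aug_homog : ∀ b : ι 0,
    aug (fun b' => if b' = b then 1 else 0) ∈ gr (twist 0 b)
  d_homog : ∀ i (b : ι (i + 1)) (y : ι i),
    (d i (fun b' => if b' = b then 1 else 0) y).IsHomogeneous
      ((twist (i + 1) b - twist i y).toNat) ∧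
    (twist (i + 1) b - twist i y < 0 →
      d i (fun b' => if b' = b then 1 else 0) y = 0)

/-- `M` has Castelnuovo–Mumford regularity at most `r`:
some graded free resolution of `M` has all its `i`-th twists `≤ r + i`.
(For a finitely generated graded module this holds iff `reg M ≤ r`, since the
minimal free resolution realizes the bound and embeds in any resolution.) -/
def HasRegBound (k : Type) [Field k] (σ : Type)
    (M : Type) [AddCommGroup M] [Module (MvPolynomial σ k) M]
    [Module k M] [IsScalarTower k (MvPolynomial σ k) M]
    (gr : ℤ → Submodule k M) (r : ℤ) : Prop :=
  ∃ F : GradedFreeRes k σ M gr, ∀ (i : ℕ) (b : F.ι i), F.twist i b ≤ r + i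

/-- `M` has projective dimension at most `p`: some graded free resolution of
`M` vanishes in homological degrees `> p`. -/
def HasPdBound (k : Type) [Field k] (σ : Type)
    (M : Type) [AddCommGroup M] [Module (MvPolynomial σ k) M]
    [Module k M] [IsScalarTower k (MvPolynomial σ k) M]
    (gr : ℤ → Submodule k M) (p : ℕ) : Prop :=
  ∃ F : GradedFreeRes k σ M gr, ∀ i : ℕ, p < i → IsEmpty (F.ι i)

/-- The grading on (the underlying module of) a homogeneous ideal `I ⊆ S`. -/
noncomputable def grIdeal {k : Type} [Field k] {σ : Type}
    (I : Ideal (MvPolynomial σ k)) (j : ℤ) : Submodule k ↥I :=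
  if j < 0 then ⊥ else
    Submodule.span k {x : ↥I | (x : MvPolynomial σ k).IsHomogeneous j.toNat}

/-- The quotient grading on `S/I` for a homogeneous ideal `I ⊆ S`. -/
noncomputable def grQuot {k : Type} [Field k] {σ : Type}
    (I : Ideal (MvPolynomial σ k)) (j : ℤ) :
    Submodule k (MvPolynomial σ k ⧸ I) :=
  if j < 0 then ⊥ else
    Submodule.span k {x : MvPolynomial σ k ⧸ I |
      ∃ u : MvPolynomial σ k, u.IsHomogeneous j.toNat ∧ Ideal.Quotient.mk I u = x}



namespace CavigliaAux

variable {k : Type} [Field k]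

local notation "SS" => MvPolynomial (Fin 4) k

/-- The substitution killing the variable `t`. -/
noncomputable def kill (t : Fin 4) : SS →ₐ[k] SS :=
  aeval (fun s => if s = t then 0 else X s)

@[simp] lemma kill_X_self (t : Fin 4) : kill (k := k) t (X t) = 0 := by
  simp [kill]

lemma kill_X_ne {s t : Fin 4} (h : s ≠ t) : kill (k := k) t (X s) = X s := by
  simp [kill, h]

lemma X_dvd_sub_kill (t : Fin 4) (p : SS) : X t ∣ p - kill t p := by
  induction p using MvPolynomial.induction_on with
  | C a => simp [kill]
  | add p q hp hq =>
      have : p + q - kill t (p + q) = (p - kill t p) + (q - kill t q) := by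
        rw [map_add]; ring
      rw [this]; exact dvd_add hp hq
  | mul_X p i hp =>
      rcases eq_or_ne i t with rfl | hne
      · rw [map_mul, kill_X_self, mul_zero, sub_zero]
        exact Dvd.intro_left p rfl
      · rw [map_mul, kill_X_ne hne]
        have : p * X i - kill t p * X i = (p - kill t p) * X i := by ring
        rw [this]
        exact Dvd.dvd.mul_right hp _

lemma X_dvd_of_kill_eq_zero {t : Fin 4} {p : SS} (h : kill t p = 0) : X t ∣ p := by
  have := X_dvd_sub_kill t p
  rwa [h, sub_zero] at this

lemma X_mul_cancel {t : Fin 4} {a b : SS} (h : X t * a = X t * b) : a = b :=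
  mul_left_cancel₀ (X_ne_zero t) h

/-- Koszul exactness, two variables. -/
lemma K1_two {s t : Fin 4} (hst : s ≠ t) {A B : SS}
    (h : X s * A + X t * B = 0) : ∃ c, A = X t * c ∧ B = -(X s * c) := by
  have h1 : kill s B = 0 := by
    have := congrArg (kill s) h
    rw [map_add, map_mul, map_mul, kill_X_self, kill_X_ne (Ne.symm hst), map_zero,
      zero_mul, zero_add] at this
    have hXt : (X t : SS) ≠ 0 := X_ne_zero t
    exact (mul_eq_zero.mp this).resolve_left hXt
  obtain ⟨B', hB'⟩ := X_dvd_of_kill_eq_zero h1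
  have h2 : X s * (A + X t * B') = 0 := by
    rw [hB'] at h; ring_nf; ring_nf at h; linear_combination h
  have h3 : A = -(X t * B') := by
    have := (mul_eq_zero.mp h2).resolve_left (X_ne_zero s)
    linear_combination this
  exact ⟨-B', by rw [h3]; ring, by rw [hB']; ring⟩

/-- Koszul exactness at spot 1, three variables (within the 4-variable ring). -/
lemma K1_three {A B C : SS} (h : X 0 * A + X 1 * B + X 2 * C = 0) :
    ∃ c e g, A = X 1 * c + X 2 * e ∧ B = -(X 0 * c) + X 2 * g ∧
      C = -(X 0 * e) - X 1 * g := by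
  have h2 : X 0 * kill 2 A + X 1 * kill 2 B = 0 := by
    have := congrArg (kill 2) h
    simp only [map_add, map_mul, kill_X_self, kill_X_ne (show (0:Fin 4) ≠ 2 by decide),
      kill_X_ne (show (1:Fin 4) ≠ 2 by decide), map_zero, zero_mul, add_zero] at this
    exact this
  obtain ⟨c, hA, hB⟩ := K1_two (show (0:Fin 4) ≠ 1 by decide) h2
  obtain ⟨A', hA'⟩ := X_dvd_sub_kill 2 A
  obtain ⟨B', hB'⟩ := X_dvd_sub_kill 2 B
  have hAe : A = X 1 * c + X 2 * A' := by
    have := hA'; rw [hA] at this; linear_combination this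
  have hBe : B = -(X 0 * c) + X 2 * B' := by
    have := hB'; rw [hB] at this; linear_combination this
  have h3 : X 2 * (X 0 * A' + X 1 * B' + C) = 0 := by
    rw [hAe, hBe] at h; linear_combination h
  have hC : C = -(X 0 * A') - X 1 * B' := by
    have := (mul_eq_zero.mp h3).resolve_left (X_ne_zero 2)
    linear_combination this
  exact ⟨c, A', B', hAe, hBe, hC⟩

/-- Koszul exactness at spot 1, four variables. -/
lemma K1_four (v : Fin 4 → SS) (h : ∑ t, X t * v t = 0) :
    ∃ W : Fin 4 → Fin 4 → SS, (∀ s t, W s t = -W t s) ∧ (∀ t, W t t = 0) ∧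
      (∀ t, v t = ∑ s, X s * W s t) := by
  rw [Fin.sum_univ_four] at h
  have h3 : X 0 * kill 3 (v 0) + X 1 * kill 3 (v 1) + X 2 * kill 3 (v 2) = 0 := by
    have := congrArg (kill 3) h
    simp only [map_add, map_mul, kill_X_self, kill_X_ne (show (0:Fin 4) ≠ 3 by decide),
      kill_X_ne (show (1:Fin 4) ≠ 3 by decide), kill_X_ne (show (2:Fin 4) ≠ 3 by decide),
      map_zero, zero_mul, add_zero] at this
    exact this
  obtain ⟨c, e, g, hA, hB, hC⟩ := K1_three h3
  obtain ⟨v0', hv0⟩ := X_dvd_sub_kill 3 (v 0)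
  obtain ⟨v1', hv1⟩ := X_dvd_sub_kill 3 (v 1)
  obtain ⟨v2', hv2⟩ := X_dvd_sub_kill 3 (v 2)
  have e0 : v 0 = X 1 * c + X 2 * e + X 3 * v0' := by rw [hA] at hv0; linear_combination hv0
  have e1 : v 1 = -(X 0 * c) + X 2 * g + X 3 * v1' := by rw [hB] at hv1; linear_combination hv1
  have e2 : v 2 = -(X 0 * e) - X 1 * g + X 3 * v2' := by rw [hC] at hv2; linear_combination hv2
  have h4 : X 3 * (X 0 * v0' + X 1 * v1' + X 2 * v2' + v 3) = 0 := by
    rw [e0, e1, e2] at h; linear_combination h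
  have e3 : v 3 = -(X 0 * v0') - X 1 * v1' - X 2 * v2' := by
    have := (mul_eq_zero.mp h4).resolve_left (X_ne_zero 3)
    linear_combination this
  refine ⟨![![0, -c, -e, -v0'], ![c, 0, -g, -v1'], ![e, g, 0, -v2'], ![v0', v1', v2', 0]],
    ?_, ?_, ?_⟩
  · intro s t; fin_cases s <;> fin_cases t <;> simp
  · intro t; fin_cases t <;> simp
  · intro t
    rw [Fin.sum_univ_four]
    fin_cases t <;> simp <;> [linear_combination e0; linear_combination e1;
      linear_combination e2; linear_combination e3]

/-- Koszul exactness at spot 2, three variables (top). -/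
lemma K2_three {p01 p02 p12 : SS}
    (h0 : X 1 * p01 + X 2 * p02 = 0) (h1 : X 0 * p01 - X 2 * p12 = 0) :
    ∃ θ, p01 = X 2 * θ ∧ p02 = -(X 1 * θ) ∧ p12 = X 0 * θ := by
  obtain ⟨c, h01, h02⟩ := K1_two (show (1:Fin 4) ≠ 2 by decide) h0
  refine ⟨c, h01, by rw [h02], ?_⟩
  apply X_mul_cancel (t := 2)
  rw [h01] at h1; linear_combination -h1

/-- Koszul exactness at spot 2, four variables. -/
lemma K2_four (P : Fin 4 → Fin 4 → SS) (hanti : ∀ s t, P s t = -P t s)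
    (hdiag : ∀ t, P t t = 0) (heq : ∀ t, ∑ s, X s * P s t = 0) :
    ∃ θ012 θ013 θ023 θ123 : SS,
      P 2 3 = X 0 * θ023 + X 1 * θ123 ∧
      P 1 3 = X 0 * θ013 - X 2 * θ123 ∧
      P 1 2 = X 0 * θ012 + X 3 * θ123 ∧
      P 0 3 = -(X 1 * θ013) - X 2 * θ023 ∧
      P 0 2 = -(X 1 * θ012) + X 3 * θ023 ∧
      P 0 1 = X 2 * θ012 + X 3 * θ013 := by
  -- reduced equations after killing X 3
  have hred : ∀ t, X 0 * kill 3 (P 0 t) + X 1 * kill 3 (P 1 t) + X 2 * kill 3 (P 2 t)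
      + 0 * kill 3 (P 3 t) = 0 := by
    intro t
    have := congrArg (kill 3) (heq t)
    rw [Fin.sum_univ_four] at this
    simp only [map_add, map_mul, kill_X_self, kill_X_ne (show (0:Fin 4) ≠ 3 by decide),
      kill_X_ne (show (1:Fin 4) ≠ 3 by decide), kill_X_ne (show (2:Fin 4) ≠ 3 by decide),
      map_zero] at this
    simpa using this
  -- divisibility decompositions for the three upper-left pairs
  obtain ⟨P01', h01⟩ := X_dvd_sub_kill 3 (P 0 1)
  obtain ⟨P02', h02⟩ := X_dvd_sub_kill 3 (P 0 2)
  obtain ⟨P12', h12⟩ := X_dvd_sub_kill 3 (P 1 2)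
  -- 3-variable K2 on the killed parts
  have k00 : kill 3 (P 0 0) = 0 := by rw [hdiag]; simp
  have k11 : kill 3 (P 1 1) = 0 := by rw [hdiag]; simp
  have k22 : kill 3 (P 2 2) = 0 := by rw [hdiag]; simp
  have k10 : kill 3 (P 1 0) = -kill 3 (P 0 1) := by rw [hanti 1 0]; simp
  have k20 : kill 3 (P 2 0) = -kill 3 (P 0 2) := by rw [hanti 2 0]; simp
  have k21 : kill 3 (P 2 1) = -kill 3 (P 1 2) := by rw [hanti 2 1]; simp
  have hr0 : X 1 * kill 3 (P 0 1) + X 2 * kill 3 (P 0 2) = 0 := by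
    have := hred 0; rw [k00, k10, k20] at this; linear_combination -this
  have hr1 : X 0 * kill 3 (P 0 1) - X 2 * kill 3 (P 1 2) = 0 := by
    have := hred 1; rw [k11, k21] at this; linear_combination this
  obtain ⟨θ, ht01, ht02, ht12⟩ := K2_three hr0 hr1
  -- derive the fourth-column entries from the full equations
  have e0 : P 3 0 = X 1 * P01' + X 2 * P02' := by
    have h := heq 0
    rw [Fin.sum_univ_four, hdiag 0, hanti 1 0, hanti 2 0] at h
    have hP01 : P 0 1 = kill 3 (P 0 1) + X 3 * P01' := by linear_combination h01
    have hP02 : P 0 2 = kill 3 (P 0 2) + X 3 * P02' := by linear_combination h02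
    have h' : X 3 * (-(X 1 * P01') - X 2 * P02' + P 3 0) = 0 := by
      rw [hP01, hP02] at h; linear_combination h + hr0
    have := (mul_eq_zero.mp h').resolve_left (X_ne_zero 3)
    linear_combination this
  have e1 : P 3 1 = -(X 0 * P01') + X 2 * P12' := by
    have h := heq 1
    rw [Fin.sum_univ_four, hdiag 1, hanti 2 1] at h
    have hP01 : P 0 1 = kill 3 (P 0 1) + X 3 * P01' := by linear_combination h01
    have hP12 : P 1 2 = kill 3 (P 1 2) + X 3 * P12' := by linear_combination h12
    have h' : X 3 * (X 0 * P01' - X 2 * P12' + P 3 1) = 0 := by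
      rw [hP01, hP12] at h; linear_combination h - hr1
    have := (mul_eq_zero.mp h').resolve_left (X_ne_zero 3)
    linear_combination this
  have hr2 : X 0 * kill 3 (P 0 2) + X 1 * kill 3 (P 1 2) = 0 := by
    have := hred 2; rw [k22] at this; linear_combination this
  have e2 : P 3 2 = -(X 0 * P02') - X 1 * P12' := by
    have h := heq 2
    rw [Fin.sum_univ_four, hdiag 2] at h
    have hP02 : P 0 2 = kill 3 (P 0 2) + X 3 * P02' := by linear_combination h02
    have hP12 : P 1 2 = kill 3 (P 1 2) + X 3 * P12' := by linear_combination h12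
    have h' : X 3 * (X 0 * P02' + X 1 * P12' + P 3 2) = 0 := by
      rw [hP02, hP12] at h; linear_combination h - hr2
    have := (mul_eq_zero.mp h').resolve_left (X_ne_zero 3)
    linear_combination this
  refine ⟨θ, P01', P02', P12', ?_, ?_, ?_, ?_, ?_, ?_⟩
  · rw [hanti 2 3, e2]; ring
  · rw [hanti 1 3, e1]; ring
  · have : P 1 2 = kill 3 (P 1 2) + X 3 * P12' := by linear_combination h12
    rw [this, ht12]
  · rw [hanti 0 3, e0]; ring
  · have : P 0 2 = kill 3 (P 0 2) + X 3 * P02' := by linear_combination h02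
    rw [this, ht02]
  · have : P 0 1 = kill 3 (P 0 1) + X 3 * P01' := by linear_combination h01
    rw [this, ht01]

/-- Koszul exactness at the top spot, four variables. -/
lemma K3_four (p : Fin 4 → SS) (h : ∀ s t, X s * p t = X t * p s) :
    ∃ w, ∀ t, p t = X t * w := by
  have h1 : kill 0 (p 0) = 0 := by
    have := congrArg (kill 0) (h 0 1)
    rw [map_mul, map_mul, kill_X_self, zero_mul, kill_X_ne (show (1:Fin 4) ≠ 0 by decide)]
      at this
    exact ((mul_eq_zero.mp this.symm).resolve_left (X_ne_zero 1))
  obtain ⟨w, hw⟩ := X_dvd_of_kill_eq_zero h1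
  refine ⟨w, fun t => ?_⟩
  apply X_mul_cancel (t := 0)
  rw [h 0 t, hw]; ring

/-! ### Decomposition of constant-term-zero polynomials -/

lemma exists_X_mul_aux (p : SS) :
    ∃ c : Fin 4 → SS, p = C (coeff 0 p) + ∑ t, X t * c t := by
  induction p using MvPolynomial.induction_on with
  | C a => exact ⟨0, by simp⟩
  | add p q hp hq =>
      obtain ⟨cp, hcp⟩ := hp
      obtain ⟨cq, hcq⟩ := hq
      refine ⟨cp + cq, ?_⟩
      rw [coeff_add, map_add]
      calc p + q = (C (coeff 0 p) + ∑ t, X t * cp t) + (C (coeff 0 q) + ∑ t, X t * cq t) := by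
            rw [← hcp, ← hcq]
        _ = C (coeff 0 p) + C (coeff 0 q) + ∑ t, (X t * cp t + X t * cq t) := by
            rw [Finset.sum_add_distrib]; ring
        _ = C (coeff 0 p) + C (coeff 0 q) + ∑ t, X t * (cp + cq) t := by
            simp [mul_add]
  | mul_X p i _ =>
      refine ⟨fun t => if t = i then p else 0, ?_⟩
      have h0 : coeff 0 (p * X i) = 0 := by
        rw [coeff_mul_X']
        simp
      rw [h0, map_zero, zero_add]
      have : ∀ t : Fin 4, X t * (if t = i then p else 0) = if t = i then X t * p else 0 := by
        intro t; split_ifs <;> simp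
      simp only [this, Finset.sum_ite_eq' Finset.univ i (fun t => X t * p),
        Finset.mem_univ, if_true]
      ring

lemma exists_X_mul {p : SS} (h : coeff 0 p = 0) :
    ∃ c : Fin 4 → SS, p = ∑ t, X t * c t := by
  obtain ⟨c, hc⟩ := exists_X_mul_aux p
  exact ⟨c, by rwa [h, map_zero, zero_add] at hc⟩

/-! ### Homogeneous component lemmas -/

lemma isHomogeneous_neg {p : SS} {n : ℕ} (h : p.IsHomogeneous n) : (-p).IsHomogeneous n :=
  (homogeneousSubmodule (Fin 4) k n).neg_mem h

lemma isHomogeneous_sub {p q : SS} {n : ℕ} (hp : p.IsHomogeneous n) (hq : q.IsHomogeneous n) :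
    (p - q).IsHomogeneous n :=
  (homogeneousSubmodule (Fin 4) k n).sub_mem hp hq

lemma hcomp_of_isHomogeneous {p : SS} {m n : ℕ} (h : p.IsHomogeneous n) :
    homogeneousComponent m p = if m = n then p else 0 :=
  homogeneousComponent_of_mem h

lemma hcomp_mul_right (E : SS) {e : ℕ} (hE : E.IsHomogeneous e) (n : ℕ) (p : SS) :
    homogeneousComponent n (p * E) =
      if e ≤ n then homogeneousComponent (n - e) p * E else 0 := by
  induction p using MvPolynomial.induction_on' with
  | monomial m c =>
      have hm : (monomial m c : SS).IsHomogeneous m.degree := isHomogeneous_monomial c rfl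
      rw [hcomp_of_isHomogeneous (hm.mul hE)]
      by_cases h1 : e ≤ n
      · rw [if_pos h1, hcomp_of_isHomogeneous hm]
        by_cases h2 : n = m.degree + e
        · rw [if_pos h2, if_pos (by omega)]
        · rw [if_neg h2, if_neg (by omega), zero_mul]
      · rw [if_neg h1, if_neg (by omega)]
  | add p q hp hq =>
      rw [add_mul, map_add, map_add, hp, hq]
      split_ifs <;> simp [add_mul]

lemma coeff_zero_of_isHomogeneous {p : SS} {n : ℕ} (h : p.IsHomogeneous n) (hn : n ≠ 0) :
    coeff 0 p = 0 :=
  h.coeff_eq_zero (by simpa using (Ne.symm hn))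

/-! ### Module-level Koszul lemmas -/

lemma K1F {ι : Type} (v : Fin 4 → ι → SS) (h : ∑ t, (X t : SS) • v t = 0) :
    ∃ W : Fin 4 → Fin 4 → ι → SS, (∀ s t, W s t = -W t s) ∧ (∀ t, W t t = 0) ∧
      ∀ t, v t = ∑ s, (X s : SS) • W s t := by
  have hb : ∀ b : ι, ∑ t, (X t : SS) * v t b = 0 := by
    intro b
    have := congrFun h b
    simpa [Finset.sum_apply] using this
  choose W hW1 hW2 hW3 using fun b => K1_four (fun t => v t b) (hb b)
  refine ⟨fun s t b => W b s t, ?_, ?_, ?_⟩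
  · intro s t; funext b; exact hW1 b s t
  · intro t; funext b; exact hW2 b t
  · intro t; funext b
    have := hW3 b t
    simpa [Finset.sum_apply] using this

lemma K2F {ι : Type} (P : Fin 4 → Fin 4 → ι → SS) (hanti : ∀ s t, P s t = -P t s)
    (hdiag : ∀ t, P t t = 0) (heq : ∀ t, ∑ s, (X s : SS) • P s t = 0) :
    ∃ θ012 θ013 θ023 θ123 : ι → SS,
      P 2 3 = (X 0 : SS) • θ023 + (X 1 : SS) • θ123 ∧
      P 1 3 = (X 0 : SS) • θ013 - (X 2 : SS) • θ123 ∧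
      P 1 2 = (X 0 : SS) • θ012 + (X 3 : SS) • θ123 ∧
      P 0 3 = -((X 1 : SS) • θ013) - (X 2 : SS) • θ023 ∧
      P 0 2 = -((X 1 : SS) • θ012) + (X 3 : SS) • θ023 ∧
      P 0 1 = (X 2 : SS) • θ012 + (X 3 : SS) • θ013 := by
  have hb : ∀ b : ι, ∀ t, ∑ s, (X s : SS) * P s t b = 0 := by
    intro b t
    have := congrFun (heq t) b
    simpa [Finset.sum_apply] using this
  choose θ012 θ013 θ023 θ123 h1 h2 h3 h4 h5 h6 using
    fun b => K2_four (fun s t => P s t b)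
      (fun s t => congrFun (hanti s t) b)
      (fun t => congrFun (hdiag t) b) (hb b)
  exact ⟨θ012, θ013, θ023, θ123,
    funext fun b => by simpa using h1 b,
    funext fun b => by simpa using h2 b,
    funext fun b => by simpa using h3 b,
    funext fun b => by simpa using h4 b,
    funext fun b => by simpa using h5 b,
    funext fun b => by simpa using h6 b⟩

lemma K3F {ι : Type} (p : Fin 4 → ι → SS) (h : ∀ s t, (X s : SS) • p t = (X t : SS) • p s) :
    ∃ w, ∀ t, p t = (X t : SS) • w := by
  choose w hw using fun b => K3_four (fun t => p t b)
    (fun s t => by simpa using congrFun (h s t) b)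
  exact ⟨w, fun t => funext fun b => by simpa using hw b t⟩

lemma decompF {ι : Type} (w : ι → SS) (h : ∀ b, coeff 0 (w b) = 0) :
    ∃ c : Fin 4 → ι → SS, w = ∑ t, (X t : SS) • c t := by
  choose c hc using fun b => exists_X_mul (h b)
  refine ⟨fun t b => c b t, funext fun b => ?_⟩
  simpa [Finset.sum_apply] using hc b

/-! ### Graded structure on the terms of a resolution -/

section Resolution

variable {I : Ideal (MvPolynomial (Fin 4) k)}
variable (F : GradedFreeRes k (Fin 4) ↥I (grIdeal I))

/-- basis vector -/
noncomputable def delta (i : ℕ) (b : F.ι i) : F.ι i → SS := fun b' => if b' = b then 1 else 0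

lemma repr_eq (i : ℕ) (w : F.ι i → SS) :
    w = ∑ b ∈ (F.fin i).elems, w b • delta F i b := by
  funext y
  rw [Finset.sum_apply]
  symm
  have step : ∀ b ∈ (F.fin i).elems, (w b • delta F i b) y = if y = b then w b else 0 := by
    intro b _
    simp only [delta, Pi.smul_apply, smul_eq_mul]
    split_ifs <;> simp
  rw [Finset.sum_congr rfl step, Finset.sum_ite_eq (F.fin i).elems y w,
    if_pos ((F.fin i).complete y)]

/-- the entries of the differential -/
noncomputable def entry (i : ℕ) (b : F.ι (i+1)) (y : F.ι i) : SS :=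
  F.d i (delta F (i+1) b) y

lemma d_apply (i : ℕ) (w : F.ι (i+1) → SS) (y : F.ι i) :
    F.d i w y = ∑ b ∈ (F.fin (i+1)).elems, w b * entry F i b y := by
  conv_lhs => rw [repr_eq F (i+1) w]
  rw [map_sum]
  rw [Finset.sum_apply]
  congr 1
  funext b
  rw [map_smul]
  simp [entry, smul_eq_mul]

lemma entry_homog (i : ℕ) (b : F.ι (i+1)) (y : F.ι i) :
    (entry F i b y).IsHomogeneous (F.twist (i+1) b - F.twist i y).toNat :=
  (F.d_homog i b y).1

lemma entry_neg_zero (i : ℕ) (b : F.ι (i+1)) (y : F.ι i)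
    (h : F.twist (i+1) b - F.twist i y < 0) : entry F i b y = 0 :=
  (F.d_homog i b y).2 h

/-- twisted homogeneity of degree `j` -/
def IsHom (i : ℕ) (j : ℤ) (w : F.ι i → SS) : Prop :=
  ∀ b, (w b).IsHomogeneous (j - F.twist i b).toNat ∧ (j - F.twist i b < 0 → w b = 0)

/-- twisted homogeneous component of degree `j` -/
noncomputable def hcmp (i : ℕ) (j : ℤ) (w : F.ι i → SS) : F.ι i → SS := fun b =>
  if j - F.twist i b < 0 then 0 else homogeneousComponent (j - F.twist i b).toNat (w b)

lemma isHom_hcmp (i : ℕ) (j : ℤ) (w : F.ι i → SS) : IsHom F i j (hcmp F i j w) := by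
  intro b
  unfold hcmp
  split_ifs with h
  · exact ⟨isHomogeneous_zero _ _ _, fun _ => rfl⟩
  · exact ⟨homogeneousComponent_isHomogeneous _ _, fun hh => absurd hh h⟩

lemma hcmp_eq_self {i : ℕ} {j : ℤ} {w : F.ι i → SS} (h : IsHom F i j w) :
    hcmp F i j w = w := by
  funext b
  unfold hcmp
  split_ifs with hb
  · exact ((h b).2 hb).symm
  · rw [hcomp_of_isHomogeneous (h b).1, if_pos rfl]

lemma entry_mul_hcmp {i : ℕ} (j : ℤ) (b : F.ι (i+1)) (y : F.ι i) (p : SS) :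
    (if j - F.twist (i+1) b < 0 then 0
      else homogeneousComponent (j - F.twist (i+1) b).toNat p) * entry F i b y
    = if j - F.twist i y < 0 then 0
      else homogeneousComponent (j - F.twist i y).toNat (p * entry F i b y) := by
  by_cases hneg : F.twist (i+1) b - F.twist i y < 0
  · rw [entry_neg_zero F i b y hneg, mul_zero, mul_zero, map_zero]
    split_ifs <;> simp
  · have hE := entry_homog F i b y
    by_cases h1 : j - F.twist i y < 0
    · have hc : j - F.twist (i+1) b < 0 := by omega
      rw [if_pos h1, if_pos hc, zero_mul]
    · rw [if_neg h1, hcomp_mul_right _ hE]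
      by_cases h2 : j - F.twist (i+1) b < 0
      · have hc : ¬ ((F.twist (i+1) b - F.twist i y).toNat ≤ (j - F.twist i y).toNat) := by
          omega
        rw [if_pos h2, if_neg hc, zero_mul]
      · have hc : (F.twist (i+1) b - F.twist i y).toNat ≤ (j - F.twist i y).toNat := by omega
        have hc2 : (j - F.twist i y).toNat - (F.twist (i+1) b - F.twist i y).toNat
            = (j - F.twist (i+1) b).toNat := by omega
        rw [if_neg h2, if_pos hc, hc2]

lemma d_hcmp (i : ℕ) (j : ℤ) (w : F.ι (i+1) → SS) :
    F.d i (hcmp F (i+1) j w) = hcmp F i j (F.d i w) := by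
  funext y
  rw [d_apply]
  unfold hcmp
  have step : ∀ b ∈ (F.fin (i+1)).elems,
      (if j - F.twist (i+1) b < 0 then 0
        else homogeneousComponent (j - F.twist (i+1) b).toNat (w b)) * entry F i b y
      = if j - F.twist i y < 0 then 0
        else homogeneousComponent (j - F.twist i y).toNat (w b * entry F i b y) := by
    intro b _
    exact entry_mul_hcmp F j b y (w b)
  rw [Finset.sum_congr rfl step]
  by_cases h1 : j - F.twist i y < 0
  · simp only [if_pos h1, Finset.sum_const_zero]
  · simp only [if_neg h1]
    rw [← map_sum, d_apply]

lemma lift_d {i : ℕ} {j : ℤ} {v : F.ι i → SS} (hv : v ∈ LinearMap.range (F.d i))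
    (h : IsHom F i j v) : ∃ w, F.d i w = v ∧ IsHom F (i+1) j w := by
  obtain ⟨w0, hw0⟩ := hv
  exact ⟨hcmp F (i+1) j w0, by rw [d_hcmp, hw0, hcmp_eq_self F h], isHom_hcmp F (i+1) j w0⟩

/-! ### The augmentation and the grading of the ideal -/

lemma grIdeal_prop {j : ℤ} {x : ↥I} (hx : x ∈ grIdeal I j) :
    ((x : MvPolynomial (Fin 4) k).IsHomogeneous j.toNat) ∧ (j < 0 → x = 0) := by
  unfold grIdeal at hx
  split_ifs at hx with hj
  · rw [Submodule.mem_bot] at hx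
    subst hx
    exact ⟨by simpa using isHomogeneous_zero (Fin 4) k j.toNat, fun _ => rfl⟩
  · refine ⟨?_, fun hh => absurd hh hj⟩
    induction hx using Submodule.span_induction with
    | mem y hy => exact hy
    | zero => simpa using isHomogeneous_zero (Fin 4) k j.toNat
    | add y z _ _ hy hz => rw [Submodule.coe_add]; exact hy.add hz
    | smul c y _ hy =>
        have : ((c • y : ↥I) : SS) = c • (y : SS) := rfl
        rw [this, smul_eq_C_mul]
        exact hy.C_mul c

noncomputable def Gb (b : F.ι 0) : SS := ((F.aug (delta F 0 b) : ↥I) : SS)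

lemma Gb_homog (b : F.ι 0) : (Gb F b).IsHomogeneous (F.twist 0 b).toNat :=
  (grIdeal_prop (F.aug_homog b)).1

lemma Gb_neg_zero (b : F.ι 0) (h : F.twist 0 b < 0) : Gb F b = 0 := by
  have h0 : F.aug (delta F 0 b) = 0 := (grIdeal_prop (F.aug_homog b)).2 h
  unfold Gb
  rw [h0]
  rfl

lemma aug_apply (w : F.ι 0 → SS) :
    ((F.aug w : ↥I) : SS) = ∑ b ∈ (F.fin 0).elems, w b * Gb F b := by
  conv_lhs => rw [repr_eq F 0 w]
  rw [map_sum]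
  rw [AddSubmonoidClass.coe_finset_sum]
  congr 1
  funext b
  rw [map_smul]
  simp [Gb, smul_eq_mul]

lemma aug_hcmp (j : ℤ) (hj : 0 ≤ j) (w : F.ι 0 → SS) :
    ((F.aug (hcmp F 0 j w) : ↥I) : SS)
      = homogeneousComponent j.toNat ((F.aug w : ↥I) : SS) := by
  rw [aug_apply, aug_apply, map_sum]
  congr 1
  funext b
  unfold hcmp
  by_cases hneg : F.twist 0 b < 0
  · rw [Gb_neg_zero F b hneg, mul_zero, mul_zero, map_zero]
  · rw [hcomp_mul_right _ (Gb_homog F b)]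
    by_cases h2 : j - F.twist 0 b < 0
    · have hc : ¬ ((F.twist 0 b).toNat ≤ j.toNat) := by omega
      rw [if_pos h2, if_neg hc, zero_mul]
    · have hc : (F.twist 0 b).toNat ≤ j.toNat := by omega
      have hc2 : j.toNat - (F.twist 0 b).toNat = (j - F.twist 0 b).toNat := by omega
      rw [if_neg h2, if_pos hc, hc2]

lemma lift_aug {j : ℤ} (hj : 0 ≤ j) (x : ↥I)
    (hx : ((x : MvPolynomial (Fin 4) k)).IsHomogeneous j.toNat) :
    ∃ a, F.aug a = x ∧ IsHom F 0 j a := by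
  obtain ⟨a0, ha0⟩ := F.aug_surj x
  refine ⟨hcmp F 0 j a0, ?_, isHom_hcmp F 0 j a0⟩
  apply Subtype.ext
  rw [aug_hcmp F j hj a0, ha0, hcomp_of_isHomogeneous hx, if_pos rfl]

/-! ### IsHom algebra -/

lemma IsHom.smulX {i : ℕ} {j : ℤ} {w : F.ι i → SS} (t : Fin 4) (h : IsHom F i j w) :
    IsHom F i (j+1) ((X t : SS) • w) := by
  intro b
  have hb := h b
  simp only [Pi.smul_apply, smul_eq_mul]
  by_cases hneg : j - F.twist i b < 0
  · rw [hb.2 hneg, mul_zero]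
    exact ⟨isHomogeneous_zero _ _ _, fun _ => rfl⟩
  · constructor
    · have : (j + 1 - F.twist i b).toNat = 1 + (j - F.twist i b).toNat := by omega
      rw [this]
      exact (isHomogeneous_X k t).mul hb.1
    · intro hh; omega

lemma IsHom.sub {i : ℕ} {j : ℤ} {v w : F.ι i → SS} (hv : IsHom F i j v) (hw : IsHom F i j w) :
    IsHom F i j (v - w) := by
  intro b
  refine ⟨isHomogeneous_sub ((hv b).1) ((hw b).1), fun hh => ?_⟩
  simp [Pi.sub_apply, (hv b).2 hh, (hw b).2 hh]

lemma IsHom.add {i : ℕ} {j : ℤ} {v w : F.ι i → SS} (hv : IsHom F i j v) (hw : IsHom F i j w) :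
    IsHom F i j (v + w) := by
  intro b
  refine ⟨((hv b).1).add ((hw b).1), fun hh => ?_⟩
  simp [Pi.add_apply, (hv b).2 hh, (hw b).2 hh]

lemma IsHom.neg {i : ℕ} {j : ℤ} {w : F.ι i → SS} (hw : IsHom F i j w) :
    IsHom F i j (-w) := by
  intro b
  refine ⟨isHomogeneous_neg ((hw b).1), fun hh => ?_⟩
  simp [(hw b).2 hh]

lemma IsHom.zero (i : ℕ) (j : ℤ) : IsHom F i j (0 : F.ι i → SS) :=
  fun _ => ⟨isHomogeneous_zero _ _ _, fun _ => rfl⟩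

end Resolution


lemma vec4_0 {α : Type} (a b c d : α) : ![a,b,c,d] 0 = a := rfl
lemma vec4_1 {α : Type} (a b c d : α) : ![a,b,c,d] 1 = b := rfl
lemma vec4_2 {α : Type} (a b c d : α) : ![a,b,c,d] 2 = c := rfl
lemma vec4_3 {α : Type} (a b c d : α) : ![a,b,c,d] 3 = d := rfl

lemma fin4_cases (t : Fin 4) : t = 0 ∨ t = 1 ∨ t = 2 ∨ t = 3 := by
  fin_cases t <;> simp

/-! ### The chase -/

section Chase

variable {I : Ideal (MvPolynomial (Fin 4) k)}

lemma IsHom.congr (F : GradedFreeRes k (Fin 4) ↥I (grIdeal I)) {i : ℕ} {j j' : ℤ}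
    {w : F.ι i → SS} (h : IsHom F i j w) (e : j = j') : IsHom F i j' w := e ▸ h

theorem chase (F : GradedFreeRes k (Fin 4) ↥I (grIdeal I)) (u : SS) (n : ℕ)
    (hmem : ∀ t : Fin 4, u * X t ∈ I)
    (hhom : ∀ t : Fin 4, (u * X t).IsHomogeneous (n + 1))
    (htw : ∀ b : F.ι 3, F.twist 3 b < (n : ℤ) + 4) : u ∈ I := by
  classical
  -- Step 0: homogeneous lifts of u * X t through the augmentation
  have ha : ∀ t : Fin 4, ∃ a, F.aug a = (⟨u * X t, hmem t⟩ : ↥I) ∧ IsHom F 0 ((n : ℤ) + 1) a := by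
    intro t
    apply lift_aug F (by omega) (⟨u * X t, hmem t⟩ : ↥I)
    have e : ((n : ℤ) + 1).toNat = n + 1 := by omega
    rw [e]
    exact hhom t
  choose a haug hahom using ha
  -- Step 1: the Koszul 1-cycles A and their homogeneous lifts bt
  set A : Fin 4 → Fin 4 → (F.ι 0 → SS) :=
    fun s t => (X s : SS) • a t - (X t : SS) • a s with hAdef
  have hAanti : ∀ s t, A t s = -A s t := by
    intro s t
    simp only [hAdef]
    module
  have hAhom : ∀ s t, IsHom F 0 ((n : ℤ) + 2) (A s t) := by
    intro s t
    exact IsHom.sub F (((hahom t).smulX F s).congr F (by ring))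
      (((hahom s).smulX F t).congr F (by ring))
  have hAaug : ∀ s t, F.aug (A s t) = 0 := by
    intro s t
    simp only [hAdef]
    rw [map_sub, map_smul, map_smul, haug, haug]
    apply Subtype.ext
    show X s * (u * X t) - X t * (u * X s) = (0 : SS)
    ring
  have hArange : ∀ s t, A s t ∈ LinearMap.range (F.d 0) := by
    intro s t
    rw [← F.exact_aug]
    exact LinearMap.mem_ker.mpr (hAaug s t)
  have hbex : ∀ s t, ∃ bb, F.d 0 bb = A s t ∧ IsHom F 1 ((n : ℤ) + 2) bb :=
    fun s t => lift_d F (hArange s t) (hAhom s t)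
  choose L hL hLhom using fun s => hbex s
  set bt : Fin 4 → Fin 4 → (F.ι 1 → SS) :=
    fun s t => if s < t then L s t else if t < s then -(L t s) else 0 with hbtdef
  have hbt : ∀ s t, F.d 0 (bt s t) = A s t := by
    intro s t
    simp only [hbtdef]
    split_ifs with h1 h2
    · exact hL s t
    · rw [map_neg, hL t s, hAanti, neg_neg]
    · have : s = t := le_antisymm (not_lt.mp h2) (not_lt.mp h1)
      subst this
      rw [map_zero]
      simp only [hAdef, sub_self]
  have hbthom : ∀ s t, IsHom F 1 ((n : ℤ) + 2) (bt s t) := by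
    intro s t
    simp only [hbtdef]
    split_ifs
    · exact hLhom s t
    · exact (hLhom t s).neg F
    · exact IsHom.zero F 1 _
  -- Step 2: Koszul 2-cycles C and their homogeneous lifts E
  set C : Fin 4 → Fin 4 → Fin 4 → (F.ι 1 → SS) :=
    fun s t v => (X s : SS) • bt t v - (X t : SS) • bt s v + (X v : SS) • bt s t with hCdef
  have hChom : ∀ s t v, IsHom F 1 ((n : ℤ) + 3) (C s t v) := by
    intro s t v
    exact (IsHom.sub F (((hbthom t v).smulX F s).congr F (by ring))
      (((hbthom s v).smulX F t).congr F (by ring))).add F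
      (((hbthom s t).smulX F v).congr F (by ring))
  have hCd : ∀ s t v, F.d 0 (C s t v) = 0 := by
    intro s t v
    simp only [hCdef]
    rw [map_add, map_sub, map_smul, map_smul, map_smul, hbt, hbt, hbt]
    simp only [hAdef]
    module
  have hCrange : ∀ s t v, C s t v ∈ LinearMap.range (F.d 1) := by
    intro s t v
    rw [← F.exact_d 0]
    exact LinearMap.mem_ker.mpr (hCd s t v)
  have hEex : ∀ s t v, ∃ ee, F.d 1 ee = C s t v ∧ IsHom F 2 ((n : ℤ) + 3) ee :=
    fun s t v => lift_d F (hCrange s t v) (hChom s t v)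
  choose E hE hEhom using fun s => hEex s
  -- Step 3: the Koszul 3-cycle g and its homogeneous lift h
  set g : F.ι 2 → SS := (X 0 : SS) • E 1 2 3 - (X 1 : SS) • E 0 2 3
    + (X 2 : SS) • E 0 1 3 - (X 3 : SS) • E 0 1 2 with hgdef
  have hghom : IsHom F 2 ((n : ℤ) + 4) g := by
    refine IsHom.sub F (IsHom.add F (IsHom.sub F ?_ ?_) ?_) ?_ <;>
      exact ((hEhom _ _ _).smulX F _).congr F (by ring)
  have hgd : F.d 1 g = 0 := by
    simp only [hgdef]
    rw [map_sub, map_add, map_sub, map_smul, map_smul, map_smul, map_smul, hE, hE, hE, hE]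
    simp only [hCdef]
    module
  have hgrange : g ∈ LinearMap.range (F.d 2) := by
    rw [← F.exact_d 1]
    exact LinearMap.mem_ker.mpr hgd
  obtain ⟨h, hdh, hhhom'⟩ := lift_d F hgrange hghom
  have hhhom : IsHom F 3 ((n : ℤ) + 4) h := hhhom'
  -- Step 4: h has coordinates with zero constant term, so decomposes
  have hcoeff : ∀ b, coeff 0 (h b) = 0 := by
    intro b
    apply coeff_zero_of_isHomogeneous (hhhom b).1
    have := htw b
    omega
  obtain ⟨hh, hhd⟩ := decompF h hcoeff
  set q : Fin 4 → F.ι 2 → SS := fun t => F.d 2 (hh t) with hqdef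
  have hq : g = ∑ t, (X t : SS) • q t := by
    rw [← hdh, hhd, map_sum]
    refine Finset.sum_congr rfl fun t _ => ?_
    rw [map_smul]
  -- Step 5: descend, level 2
  set v : Fin 4 → F.ι 2 → SS := ![E 1 2 3 - q 0, -(E 0 2 3 + q 1), E 0 1 3 - q 2,
    -(E 0 1 2 + q 3)] with hvdef
  have hv : ∑ t, (X t : SS) • v t = 0 := by
    have hq4 : g = (X 0 : SS) • q 0 + (X 1 : SS) • q 1 + (X 2 : SS) • q 2
        + (X 3 : SS) • q 3 := by rw [hq, Fin.sum_univ_four]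
    rw [Fin.sum_univ_four]
    simp only [hvdef, vec4_0, vec4_1, vec4_2, vec4_3]
    rw [hgdef] at hq4
    linear_combination (norm := module) hq4
  obtain ⟨W, hWanti, hWdiag, hWeq⟩ := K1F v hv
  set V : Fin 4 → Fin 4 → F.ι 1 → SS := fun s t => F.d 1 (W s t) with hVdef
  have hdq : ∀ t, F.d 1 (q t) = 0 := by
    intro t
    have hmem2 : q t ∈ LinearMap.ker (F.d 1) := by
      rw [F.exact_d 1]
      exact ⟨hh t, rfl⟩
    exact LinearMap.mem_ker.mp hmem2
  have heqd : ∀ t, F.d 1 (v t) = ∑ s, (X s : SS) • V s t := by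
    intro t
    rw [hWeq t, map_sum]
    exact Finset.sum_congr rfl fun s _ => map_smul _ _ _
  -- the matrix B of complements
  set B : Fin 4 → Fin 4 → F.ι 1 → SS :=
    ![![0, -(bt 2 3), bt 1 3, -(bt 1 2)],
      ![bt 2 3, 0, -(bt 0 3), bt 0 2],
      ![-(bt 1 3), bt 0 3, 0, -(bt 0 1)],
      ![bt 1 2, -(bt 0 2), bt 0 1, 0]] with hBdef
  have hv0 : F.d 1 (v 0) = C 1 2 3 := by
    simp only [hvdef, vec4_0]
    rw [map_sub, hE, hdq, sub_zero]
  have hv1 : F.d 1 (v 1) = -C 0 2 3 := by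
    simp only [hvdef, vec4_1]
    rw [map_neg, map_add, hE, hdq, add_zero]
  have hv2 : F.d 1 (v 2) = C 0 1 3 := by
    simp only [hvdef, vec4_2]
    rw [map_sub, hE, hdq, sub_zero]
  have hv3 : F.d 1 (v 3) = -C 0 1 2 := by
    simp only [hvdef, vec4_3]
    rw [map_neg, map_add, hE, hdq, add_zero]
  have hBsum : ∀ t, ∑ s, (X s : SS) • B s t = F.d 1 (v t) := by
    intro t
    rcases fin4_cases t with rfl | rfl | rfl | rfl
    · rw [Fin.sum_univ_four, hv0]
      simp only [hBdef, vec4_0, vec4_1, vec4_2, vec4_3, hCdef]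
      module
    · rw [Fin.sum_univ_four, hv1]
      simp only [hBdef, vec4_0, vec4_1, vec4_2, vec4_3, hCdef]
      module
    · rw [Fin.sum_univ_four, hv2]
      simp only [hBdef, vec4_0, vec4_1, vec4_2, vec4_3, hCdef]
      module
    · rw [Fin.sum_univ_four, hv3]
      simp only [hBdef, vec4_0, vec4_1, vec4_2, vec4_3, hCdef]
      module
  set P : Fin 4 → Fin 4 → F.ι 1 → SS := fun s t => B s t - V s t with hPdef
  have hPanti : ∀ s t, P s t = -P t s := by
    intro s t
    have hVa : V s t = -V t s := by
      simp only [hVdef]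
      rw [hWanti s t, map_neg]
    have hBa : B s t = -B t s := by
      rcases fin4_cases s with rfl | rfl | rfl | rfl <;>
        rcases fin4_cases t with rfl | rfl | rfl | rfl <;>
        simp [hBdef, vec4_0, vec4_1, vec4_2, vec4_3]
    simp only [hPdef]
    rw [hVa, hBa]
    module
  have hPdiag : ∀ t, P t t = 0 := by
    intro t
    have hBd : B t t = 0 := by
      rcases fin4_cases t with rfl | rfl | rfl | rfl <;>
        simp [hBdef, vec4_0, vec4_1, vec4_2, vec4_3]
    simp only [hPdef, hVdef]
    rw [hWdiag t, map_zero, hBd]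
    module
  have hPeq : ∀ t, ∑ s, (X s : SS) • P s t = 0 := by
    intro t
    have hsplit : ∀ s : Fin 4, (X s : SS) • P s t
        = (X s : SS) • B s t - (X s : SS) • V s t := by
      intro s
      simp only [hPdef]
      module
    rw [Finset.sum_congr rfl (fun s _ => hsplit s), Finset.sum_sub_distrib,
      hBsum t, ← heqd t]
    module
  obtain ⟨θ012, θ013, θ023, θ123, p1, p2, p3, p4, p5, p6⟩ := K2F P hPanti hPdiag hPeq
  -- Step 6: descend to level 0
  have hdV : ∀ s t, F.d 0 (V s t) = 0 := by
    intro s t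
    have hmem2 : V s t ∈ LinearMap.ker (F.d 0) := by
      simp only [hVdef]
      rw [F.exact_d 0]
      exact ⟨W s t, rfl⟩
    exact LinearMap.mem_ker.mp hmem2
  have hd0P : ∀ s t, F.d 0 (P s t) = F.d 0 (B s t) := by
    intro s t
    simp only [hPdef]
    rw [map_sub, hdV, sub_zero]
  set ξ012 : F.ι 0 → SS := F.d 0 θ012 with hx012
  set ξ013 : F.ι 0 → SS := F.d 0 θ013 with hx013
  set ξ023 : F.ι 0 → SS := F.d 0 θ023 with hx023
  set ξ123 : F.ι 0 → SS := F.d 0 θ123 with hx123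
  have hB23 : B 2 3 = -(bt 0 1) := by simp [hBdef, vec4_2, vec4_3]
  have hB13 : B 1 3 = bt 0 2 := by simp [hBdef, vec4_1, vec4_3]
  have hB12 : B 1 2 = -(bt 0 3) := by simp [hBdef, vec4_1, vec4_2]
  have hB03 : B 0 3 = -(bt 1 2) := by simp [hBdef, vec4_0, vec4_3]
  have hB02 : B 0 2 = bt 1 3 := by simp [hBdef, vec4_0, vec4_2]
  have hB01 : B 0 1 = -(bt 2 3) := by simp [hBdef, vec4_0, vec4_1]
  have r1 : -(A 0 1) = (X 0 : SS) • ξ023 + (X 1 : SS) • ξ123 := by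
    have hc := congrArg (F.d 0) p1
    rw [hd0P, map_add, map_smul, map_smul, hB23, map_neg, hbt] at hc
    exact hc
  have r2 : A 0 2 = (X 0 : SS) • ξ013 - (X 2 : SS) • ξ123 := by
    have hc := congrArg (F.d 0) p2
    rw [hd0P, map_sub, map_smul, map_smul, hB13, hbt] at hc
    exact hc
  have r3 : -(A 0 3) = (X 0 : SS) • ξ012 + (X 3 : SS) • ξ123 := by
    have hc := congrArg (F.d 0) p3
    rw [hd0P, map_add, map_smul, map_smul, hB12, map_neg, hbt] at hc
    exact hc
  have r4 : -(A 1 2) = -((X 1 : SS) • ξ013) - (X 2 : SS) • ξ023 := by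
    have hc := congrArg (F.d 0) p4
    rw [hd0P, map_sub, map_neg, map_smul, map_smul, hB03, map_neg, hbt] at hc
    exact hc
  have r5 : A 1 3 = -((X 1 : SS) • ξ012) + (X 3 : SS) • ξ023 := by
    have hc := congrArg (F.d 0) p5
    rw [hd0P, map_add, map_neg, map_smul, map_smul, hB02, hbt] at hc
    exact hc
  have r6 : -(A 2 3) = (X 2 : SS) • ξ012 + (X 3 : SS) • ξ013 := by
    have hc := congrArg (F.d 0) p6
    rw [hd0P, map_add, map_smul, map_smul, hB01, map_neg, hbt] at hc
    exact hc
  simp only [hAdef] at r1 r2 r3 r4 r5 r6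
  -- Step 7: the corrected lifts commute, apply K3
  set ahat : Fin 4 → F.ι 0 → SS := ![a 0 - ξ123, a 1 + ξ023, a 2 - ξ013, a 3 + ξ012]
    with hahatdef
  have hcomm : ∀ s t, (X s : SS) • ahat t = (X t : SS) • ahat s := by
    intro s t
    rcases fin4_cases s with rfl | rfl | rfl | rfl <;>
      rcases fin4_cases t with rfl | rfl | rfl | rfl <;>
      simp only [hahatdef, vec4_0, vec4_1, vec4_2, vec4_3]
    · linear_combination (norm := module) -r1
    · linear_combination (norm := module) r2
    · linear_combination (norm := module) -r3
    · linear_combination (norm := module) r1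
    · linear_combination (norm := module) -r4
    · linear_combination (norm := module) r5
    · linear_combination (norm := module) -r2
    · linear_combination (norm := module) r4
    · linear_combination (norm := module) -r6
    · linear_combination (norm := module) r3
    · linear_combination (norm := module) -r5
    · linear_combination (norm := module) r6
  obtain ⟨w, hw⟩ := K3F ahat hcomm
  -- Conclusion
  have haugx : F.aug ξ123 = 0 := by
    have hmem2 : ξ123 ∈ LinearMap.ker F.aug := by
      simp only [hx123]
      rw [F.exact_aug]
      exact ⟨θ123, rfl⟩
    exact LinearMap.mem_ker.mp hmem2
  have h0 : F.aug (ahat 0) = (⟨u * X 0, hmem 0⟩ : ↥I) := by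
    have e : ahat 0 = a 0 - ξ123 := by simp only [hahatdef, vec4_0]
    rw [e, map_sub, haugx, sub_zero, haug]
  have h1 : F.aug (ahat 0) = (X 0 : SS) • F.aug w := by rw [hw 0, map_smul]
  have h2 : u * X 0 = X 0 * ((F.aug w : ↥I) : SS) := by
    have hc := h0.symm.trans h1
    have hc2 := congrArg (Subtype.val) hc
    simpa using hc2
  have h3 : u = ((F.aug w : ↥I) : SS) := by
    apply X_mul_cancel (t := (0 : Fin 4))
    linear_combination h2
  rw [h3]
  exact (F.aug w).2

end Chase

/-! ### The socle element of Caviglia's ideal -/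

section Socle

/-- the generating set of `I_d`, written with `d = e + 2` -/
def genSet (e : ℕ) : Set SS :=
  {X 3 ^ (e+1) * X 0 - X 2 ^ (e+1) * X 1, X 0 ^ (e+2), X 1 ^ (e+2)}

/-- the socle element -/
noncomputable def socle (e : ℕ) : SS := X 0 * X 1^(e+1) * X 2^(e^2+2*e) * X 3^e

lemma socle_homog (e : ℕ) : (socle (k := k) e).IsHomogeneous (e^2+4*e+2) := by
  have h0 : (X 0 : SS).IsHomogeneous 1 := isHomogeneous_X k 0
  have h1 : ((X 1 : SS)^(e+1)).IsHomogeneous (e+1) := isHomogeneous_X_pow 1 (e+1)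
  have h2 : ((X 2 : SS)^(e^2+2*e)).IsHomogeneous (e^2+2*e) := isHomogeneous_X_pow 2 (e^2+2*e)
  have h3 : ((X 3 : SS)^e).IsHomogeneous e := isHomogeneous_X_pow 3 e
  have := ((h0.mul h1).mul h2).mul h3
  have he : 1 + (e+1) + (e^2+2*e) + e = e^2+4*e+2 := by ring
  rw [he] at this
  exact this

lemma f_mem (e : ℕ) : (X 3 ^ (e+1) * X 0 - X 2 ^ (e+1) * X 1 : SS) ∈ Ideal.span (genSet (k := k) e) :=
  Ideal.subset_span (by left; rfl)

lemma x0_mem (e : ℕ) : (X 0 ^ (e+2) : SS) ∈ Ideal.span (genSet (k := k) e) :=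
  Ideal.subset_span (by right; left; rfl)

lemma x1_mem (e : ℕ) : (X 1 ^ (e+2) : SS) ∈ Ideal.span (genSet (k := k) e) :=
  Ideal.subset_span (by right; right; rfl)

lemma socle_mul_X0 (e : ℕ) : (socle (k := k) e) * X 0 ∈ Ideal.span (genSet (k := k) e) := by
  have hg := geom_sum₂_mul (X 1 * X 2^(e+1) : SS) (X 0 * X 3^(e+1)) e
  have hid : (socle (k := k) e) * X 0
      = (-(X 1 * X 2^e * X 3^e * X 0^2 *
          (∑ i ∈ Finset.range e, (X 1 * X 2^(e+1) : SS)^i * (X 0 * X 3^(e+1))^(e-1-i))))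
        * (X 3^(e+1) * X 0 - X 2^(e+1) * X 1)
      + (X 1 * X 2^e * X 3^(e^2+2*e)) * X 0^(e+2) := by
    unfold socle
    linear_combination (-(X 1 * X 2^e * X 3^e * X 0^2) : SS) * hg
  rw [hid]
  exact Ideal.add_mem _ (Ideal.mul_mem_left _ _ (f_mem e))
    (Ideal.mul_mem_left _ _ (x0_mem e))

lemma socle_mul_X1 (e : ℕ) : (socle (k := k) e) * X 1 ∈ Ideal.span (genSet (k := k) e) := by
  have hid : (socle (k := k) e) * X 1
      = (X 0 * X 2^(e^2+2*e) * X 3^e) * X 1^(e+2) := by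
    unfold socle; ring
  rw [hid]
  exact Ideal.mul_mem_left _ _ (x1_mem e)

lemma socle_mul_X2 (e : ℕ) : (socle (k := k) e) * X 2 ∈ Ideal.span (genSet (k := k) e) := by
  have hg := geom_sum₂_mul (X 1 * X 2^(e+1) : SS) (X 0 * X 3^(e+1)) (e+1)
  have hid : (socle (k := k) e) * X 2
      = (-(X 3^e * X 0 *
          (∑ i ∈ Finset.range (e+1), (X 1 * X 2^(e+1) : SS)^i * (X 0 * X 3^(e+1))^(e+1-1-i))))
        * (X 3^(e+1) * X 0 - X 2^(e+1) * X 1)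
      + (X 3^(e^2+3*e+1)) * X 0^(e+2) := by
    unfold socle
    linear_combination (-(X 3^e * X 0) : SS) * hg
  rw [hid]
  exact Ideal.add_mem _ (Ideal.mul_mem_left _ _ (f_mem e))
    (Ideal.mul_mem_left _ _ (x0_mem e))

lemma socle_mul_X3 (e : ℕ) : (socle (k := k) e) * X 3 ∈ Ideal.span (genSet (k := k) e) := by
  have hid : (socle (k := k) e) * X 3
      = (X 2^(e^2+2*e) * X 1^(e+1)) * (X 3^(e+1) * X 0 - X 2^(e+1) * X 1)
      + (X 2^(e^2+3*e+1)) * X 1^(e+2) := by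
    unfold socle; ring
  rw [hid]
  exact Ideal.add_mem _ (Ideal.mul_mem_left _ _ (f_mem e))
    (Ideal.mul_mem_left _ _ (x1_mem e))

/-- the substitution onto the surface `f = 0` -/
noncomputable def onSurf (e : ℕ) : SS →ₐ[k] SS :=
  aeval (fun t => if t = 0 then X 0 * X 2^(e+1) else if t = 1 then X 0 * X 3^(e+1) else X t)

lemma socle_not_mem (e : ℕ) : (socle (k := k) e) ∉ Ideal.span (genSet (k := k) e) := by
  intro hm
  unfold genSet at hm
  rw [show ({X 3 ^ (e+1) * X 0 - X 2 ^ (e+1) * X 1, X 0 ^ (e+2), X 1 ^ (e+2)} : Set SS)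
    = insert (X 3 ^ (e+1) * X 0 - X 2 ^ (e+1) * X 1) {X 0 ^ (e+2), X 1 ^ (e+2)} from rfl,
    Ideal.span_insert] at hm
  rw [Submodule.mem_sup] at hm
  obtain ⟨y, hy, z, hz, huyz⟩ := hm
  rw [Ideal.mem_span_singleton'] at hy
  obtain ⟨p, hp⟩ := hy
  rw [show ({X 0 ^ (e+2), X 1 ^ (e+2)} : Set SS) = insert (X 0 ^ (e+2)) {X 1 ^ (e+2)} from rfl,
    Ideal.span_insert] at hz
  rw [Submodule.mem_sup] at hz
  obtain ⟨y2, hy2, z2, hz2, hz'⟩ := hz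
  rw [Ideal.mem_span_singleton'] at hy2 hz2
  obtain ⟨q, hq⟩ := hy2
  obtain ⟨r, hr⟩ := hz2
  have heq : socle (k := k) e = p * (X 3 ^ (e+1) * X 0 - X 2 ^ (e+1) * X 1)
      + q * X 0 ^ (e+2) + r * X 1 ^ (e+2) := by
    linear_combination -hp - hq - hr - hz' - huyz
  -- apply the substitution
  have happ := congrArg (onSurf (k := k) e) heq
  have hX0 : onSurf (k := k) e (X 0) = X 0 * X 2^(e+1) := by simp [onSurf]
  have hX1 : onSurf (k := k) e (X 1) = X 0 * X 3^(e+1) := by simp [onSurf]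
  have hX2 : onSurf (k := k) e (X 2) = X 2 := by simp [onSurf]
  have hX3 : onSurf (k := k) e (X 3) = X 3 := by simp [onSurf]
  rw [map_add, map_add, map_mul, map_mul, map_mul, map_sub, map_mul, map_mul,
    map_pow, map_pow, map_pow, map_pow, hX0, hX1, hX2, hX3] at happ
  have hsoc : onSurf (k := k) e (socle e)
      = X 0^(e+2) * X 2^(e^2+3*e+1) * X 3^(e^2+3*e+1) := by
    unfold socle
    rw [map_mul, map_mul, map_mul, map_pow, map_pow, map_pow, hX0, hX1, hX2, hX3]
    ring
  rw [hsoc] at happ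
  have hfzero : (X 3^(e+1) * (X 0 * X 2^(e+1)) - X 2^(e+1) * (X 0 * X 3^(e+1)) : SS) = 0 := by
    ring
  rw [hfzero, mul_zero, zero_add] at happ
  -- compare coefficients at the monomial M
  set M : (Fin 4) →₀ ℕ := Finsupp.single 0 (e+2) + Finsupp.single 2 (e^2+3*e+1)
    + Finsupp.single 3 (e^2+3*e+1) with hM
  have hlhs : coeff M (X 0^(e+2) * X 2^(e^2+3*e+1) * X 3^(e^2+3*e+1) : SS) = 1 := by
    rw [X_pow_eq_monomial, X_pow_eq_monomial, X_pow_eq_monomial, monomial_mul, monomial_mul,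
      one_mul, hM, coeff_monomial, if_pos rfl]
    norm_num
  have hq0 : coeff M (onSurf (k := k) e q * (X 0 * X 2^(e+1))^(e+2)) = 0 := by
    have hmon : ((X 0 * X 2^(e+1) : SS))^(e+2)
        = monomial (Finsupp.single 0 (e+2) + Finsupp.single 2 ((e+1)*(e+2))) 1 := by
      rw [mul_pow, ← pow_mul, X_pow_eq_monomial, X_pow_eq_monomial, monomial_mul, one_mul]
    rw [hmon, coeff_mul_monomial']
    rw [if_neg]
    intro hle
    have h2 := hle 2
    have hmul : (e+1)*(e+2) = e^2+3*e+2 := by ring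
    simp [hM, Finsupp.single_apply, hmul] at h2
  have hr0 : coeff M (onSurf (k := k) e r * (X 0 * X 3^(e+1))^(e+2)) = 0 := by
    have hmon : ((X 0 * X 3^(e+1) : SS))^(e+2)
        = monomial (Finsupp.single 0 (e+2) + Finsupp.single 3 ((e+1)*(e+2))) 1 := by
      rw [mul_pow, ← pow_mul, X_pow_eq_monomial, X_pow_eq_monomial, monomial_mul, one_mul]
    rw [hmon, coeff_mul_monomial']
    rw [if_neg]
    intro hle
    have h3 := hle 3
    have hmul : (e+1)*(e+2) = e^2+3*e+2 := by ring
    simp [hM, Finsupp.single_apply, hmul] at h3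
  have := congrArg (coeff M) happ
  rw [hlhs, coeff_add, hq0, hr0] at this
  simp at this

end Socle

end CavigliaAux

/-- **Caviglia.** For every `d ≥ 2`, the ideal
`I_d = (z₂^{d-1} y₁ − y₂^{d-1} z₁, y₁^d, z₁^d)` in `k[y₁,z₁,y₂,z₂]`
(variables `y₁ = X 0`, `z₁ = X 1`, `y₂ = X 2`, `z₂ = X 3`) satisfies
`reg I_d ≥ d² − 1`: every regularity bound `r` for `I_d` satisfies
`r ≥ d² − 1`. -/
theorem caviglia_regularity_lower_bound
    {k : Type} [Field k] (d : ℕ) (hd : 2 ≤ d)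
    (I : Ideal (MvPolynomial (Fin 4) k))
    (hI : I = Ideal.span
      {X 3 ^ (d - 1) * X 0 - X 2 ^ (d - 1) * X 1, X 0 ^ d, X 1 ^ d}) :
    ∀ r : ℤ, HasRegBound k (Fin 4) ↥I (grIdeal I) r → (d : ℤ) ^ 2 - 1 ≤ r := by
  intro r hreg
  by_contra hlt
  push_neg at hlt
  obtain ⟨F, hF⟩ := hreg
  obtain ⟨e, rfl⟩ : ∃ e, d = e + 2 := ⟨d - 2, by omega⟩
  have h1 : e + 2 - 1 = e + 1 := by omega
  rw [h1] at hI
  have hIg : I = Ideal.span (CavigliaAux.genSet (k := k) e) := hI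
  have hmem : ∀ t : Fin 4, CavigliaAux.socle (k := k) e * X t ∈ I := by
    intro t
    rw [hIg]
    rcases CavigliaAux.fin4_cases t with rfl | rfl | rfl | rfl
    · exact CavigliaAux.socle_mul_X0 e
    · exact CavigliaAux.socle_mul_X1 e
    · exact CavigliaAux.socle_mul_X2 e
    · exact CavigliaAux.socle_mul_X3 e
  have hhom : ∀ t : Fin 4,
      (CavigliaAux.socle (k := k) e * X t).IsHomogeneous ((e^2+4*e+2)+1) :=
    fun t => (CavigliaAux.socle_homog (k := k) e).mul (isHomogeneous_X k t)
  have htw : ∀ b : F.ι 3, F.twist 3 b < ((e^2+4*e+2 : ℕ) : ℤ) + 4 := by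
    intro b
    have h2 := hF 3 b
    have h4 : ((e + 2 : ℕ) : ℤ) = (e : ℤ) + 2 := by push_cast; ring
    rw [h4] at hlt
    have h3 : ((e:ℤ) + 2)^2 - 1 = ((e^2+4*e+2 : ℕ) : ℤ) + 1 := by push_cast; ring
    rw [h3] at hlt
    omega
  have hu := CavigliaAux.chase F (CavigliaAux.socle (k := k) e) (e^2+4*e+2) hmem hhom htw
  rw [hIg] at hu
  exact CavigliaAux.socle_not_mem e hu
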